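/- Let N ≥ 2 and suppose R_i = 1 for all i = 1,...,m, so that m = pN for some positive integer p. Let β_1,...,β_m be integers with 0 ≤ β_i ≤ N−1, and define τ_k by ∑_{i=1}^m \overline{β_i + k} = m(N−1)/2 − N τ_k for 0 ≤ k ≤ N−1. Then τ_k = 0 for all k if and only if for each l ∈ {0,...,N−1}, exactly p of the β_i are equal to l. -/

import Mathlib

/-- `ob N j` is the representative of `j` mod `N` in `{0, …, N-1}`. -/
def ob (N : ℕ) (j : ℤ) : ℤ := j % (N : ℤ)

section Aux

variable {N : ℕ}

lemma ob_nonneg (hN : 0 < N) (y : ℤ) : 0 ≤ ob N y :=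
  Int.emod_nonneg y (by exact_mod_cast hN.ne')

lemma ob_lt (hN : 0 < N) (y : ℤ) : ob N y < N :=
  Int.emod_lt_of_pos y (by exact_mod_cast hN)

lemma ob_self (hN : 0 < N) {l : ℤ} (h0 : 0 ≤ l) (h1 : l < N) : ob N l = l :=
  Int.emod_eq_of_lt h0 h1

lemma ob_add_left (a k : ℤ) : ob N (ob N a + k) = ob N (a + k) := by
  unfold ob
  rw [Int.add_emod, Int.emod_emod_of_dvd _ dvd_rfl, ← Int.add_emod]

lemma ob_sub_left (a k : ℤ) : ob N (ob N a - k) = ob N (a - k) := by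
  unfold ob
  rw [Int.sub_emod, Int.emod_emod_of_dvd _ dvd_rfl, ← Int.sub_emod]

lemma ob_add_cancel (hN : 0 < N) {l : ℤ} (h0 : 0 ≤ l) (h1 : l < N) (k : ℤ) :
    ob N (ob N (l + k) - k) = l := by
  rw [ob_sub_left, add_sub_cancel_right, ob_self hN h0 h1]

lemma ob_eq_top_iff (hN : 0 < N) {l : ℤ} (h0 : 0 ≤ l) (h1 : l < N) (k : ℤ) :
    ob N (l + k) = (N : ℤ) - 1 ↔ l = ob N ((N : ℤ) - 1 - k) := by
  constructor
  · intro h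
    have h2 := ob_add_cancel hN h0 h1 k
    rw [h] at h2
    exact h2.symm
  · intro h
    rw [h, ob_add_left, sub_add_cancel]
    exact ob_self hN (by omega) (by omega)

lemma ob_succ (hN : 2 ≤ N) (y : ℤ) :
    ob N (y + 1) = if ob N y = (N : ℤ) - 1 then 0 else ob N y + 1 := by
  have hN' : (0:ℕ) < N := by omega
  have h0 := ob_nonneg hN' y
  have h1 := ob_lt hN' y
  have key : ob N (y + 1) = ob N (ob N y + 1) := (ob_add_left y 1).symm
  split_ifs with h
  · rw [key, h, sub_add_cancel]
    exact Int.emod_self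
  · rw [key]
    refine ob_self hN' (by omega) ?_
    have : (2:ℤ) ≤ N := by exact_mod_cast hN
    omega

lemma gauss (n : ℕ) :
    2 * ∑ l ∈ Finset.Icc (0:ℤ) ((n:ℤ) - 1), l = (n:ℤ) * ((n:ℤ) - 1) := by
  induction n with
  | zero => simp
  | succ n ih =>
    have hcast : ((n+1:ℕ):ℤ) - 1 = (n:ℤ) := by push_cast; ring
    rw [hcast]
    have hins : Finset.Icc (0:ℤ) (n:ℤ) = insert (n:ℤ) (Finset.Icc (0:ℤ) ((n:ℤ) - 1)) := by
      ext x
      simp only [Finset.mem_Icc, Finset.mem_insert]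
      omega
    rw [hins, Finset.sum_insert (by simp)]
    push_cast
    linear_combination ih

lemma sum_ob_shift (hN : 0 < N) (k : ℤ) :
    ∑ l ∈ Finset.Icc (0:ℤ) ((N:ℤ) - 1), ob N (l + k)
      = ∑ l ∈ Finset.Icc (0:ℤ) ((N:ℤ) - 1), l := by
  refine Finset.sum_nbij' (fun l => ob N (l + k)) (fun l => ob N (l - k)) ?_ ?_ ?_ ?_ ?_
  · intro a _
    have := ob_nonneg hN (a + k)
    have := ob_lt hN (a + k)
    simp only [Finset.mem_Icc]
    omega
  · intro a _
    have := ob_nonneg hN (a - k)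
    have := ob_lt hN (a - k)
    simp only [Finset.mem_Icc]
    omega
  · intro a ha
    simp only [Finset.mem_Icc] at ha
    show ob N (ob N (a + k) - k) = a
    rw [ob_sub_left, add_sub_cancel_right, ob_self hN ha.1 (by omega)]
  · intro a ha
    simp only [Finset.mem_Icc] at ha
    show ob N (ob N (a - k) + k) = a
    rw [ob_add_left, sub_add_cancel, ob_self hN ha.1 (by omega)]
  · intro a _
    rfl

end Aux

/-- the non-singular case `Rᵢ = 1`, `m = pN`: with `τ_k` defined
by `∑ᵢ ob(βᵢ + k) = m(N-1)/2 - N τ_k`, all `τ_k` vanish iff each residue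
`l ∈ {0, …, N-1}` occurs exactly `p` times among the `βᵢ`. -/
theorem tau_zero_iff_equidistributed (N p m : ℕ) (hN : 2 ≤ N) (hp : 1 ≤ p)
    (hm : m = p * N)
    (β : Fin m → ℤ) (hβ : ∀ i, 0 ≤ β i ∧ β i ≤ (N : ℤ) - 1)
    (τ : ℕ → ℤ)
    (hτ : ∀ k < N, ∑ i, ob N (β i + (k : ℤ))
      = (m : ℤ) * ((N : ℤ) - 1) / 2 - (N : ℤ) * τ k) :
    (∀ k < N, τ k = 0) ↔
      ∀ l : ℤ, 0 ≤ l → l ≤ (N : ℤ) - 1 →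
        (Finset.univ.filter (fun i => β i = l)).card = p := by
  have hN' : (0:ℕ) < N := by omega
  have hNZ : (2:ℤ) ≤ (N:ℤ) := by exact_mod_cast hN
  have hgauss : 2 * ∑ l ∈ Finset.Icc (0:ℤ) ((N:ℤ) - 1), l = (N:ℤ) * ((N:ℤ) - 1) := gauss N
  have hC : (m : ℤ) * ((N : ℤ) - 1) / 2 = (p:ℤ) * ∑ l ∈ Finset.Icc (0:ℤ) ((N:ℤ) - 1), l := by
    have h2 : (m : ℤ) * ((N : ℤ) - 1)
        = 2 * ((p:ℤ) * ∑ l ∈ Finset.Icc (0:ℤ) ((N:ℤ) - 1), l) := by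
      rw [hm]; push_cast; linear_combination (-(p:ℤ)) * hgauss
    rw [h2, Int.mul_ediv_cancel_left _ (by norm_num)]
  have hstep : ∀ k : ℕ, ∑ i, ob N (β i + ((k:ℤ) + 1))
      = (∑ i, ob N (β i + (k:ℤ))) + m
        - ((Finset.univ.filter
            (fun i => β i = ob N ((N:ℤ) - 1 - (k:ℤ)))).card : ℤ) * N := by
    intro k
    have key : ∀ i : Fin m, ob N (β i + ((k:ℤ) + 1)) =
        ob N (β i + (k:ℤ)) + 1
          - (if β i = ob N ((N:ℤ) - 1 - (k:ℤ)) then (N:ℤ) else 0) := by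
      intro i
      have hb := hβ i
      rw [← add_assoc, ob_succ hN]
      have hcond := ob_eq_top_iff hN' hb.1 (by omega) (k:ℤ)
      by_cases hcase : ob N (β i + (k:ℤ)) = (N:ℤ) - 1
      · rw [if_pos hcase, if_pos (hcond.mp hcase), hcase]; ring
      · rw [if_neg hcase, if_neg (fun hh => hcase (hcond.mpr hh))]; ring
    rw [Finset.sum_congr rfl fun i _ => key i, Finset.sum_sub_distrib,
      Finset.sum_add_distrib, Finset.sum_const, ← Finset.sum_filter, Finset.sum_const]
    simp only [Finset.card_univ, Fintype.card_fin, nsmul_eq_mul]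
    ring
  constructor
  · -- forward direction
    intro h l hl0 hl1
    have hSval : ∀ k < N, ∑ i, ob N (β i + (k:ℤ)) = (m : ℤ) * ((N : ℤ) - 1) / 2 := by
      intro k hk
      rw [hτ k hk, h k hk, mul_zero, sub_zero]
    have hFp : ∀ k < N, ((Finset.univ.filter
        (fun i => β i = ob N ((N:ℤ) - 1 - (k:ℤ)))).card : ℤ) * N = (m:ℤ) := by
      intro k hk
      have h2 := hstep k
      have h1 : ∑ i, ob N (β i + ((k:ℤ) + 1)) = (m : ℤ) * ((N : ℤ) - 1) / 2 := by
        rcases Nat.lt_or_ge (k + 1) N with hlt | hge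
        · have h3 := hSval (k + 1) hlt
          push_cast at h3
          exact h3
        · have hk1 : (k:ℤ) + 1 = (N:ℤ) := by
            have : k + 1 = N := by omega
            exact_mod_cast congrArg (Nat.cast : ℕ → ℤ) this
          have e1 : ∀ i : Fin m, ob N (β i + ((k:ℤ) + 1)) = ob N (β i + ((0:ℕ):ℤ)) := by
            intro i
            rw [hk1]
            show (β i + (N:ℤ)) % (N:ℤ) = _
            rw [Int.add_emod_right]
            norm_num [ob]
          rw [Finset.sum_congr rfl fun i _ => e1 i]
          exact hSval 0 (by omega)
      rw [h1, hSval k hk] at h2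
      linarith
    have hlt : l.toNat ≤ N - 1 := by omega
    have hkN : N - 1 - l.toNat < N := by omega
    have hkl : (N:ℤ) - 1 - ((N - 1 - l.toNat : ℕ) : ℤ) = l := by
      push_cast [Nat.cast_sub hlt, Nat.cast_sub (by omega : 1 ≤ N)]
      omega
    have h4 := hFp (N - 1 - l.toNat) hkN
    rw [hkl, ob_self hN' hl0 (by omega)] at h4
    have h5 : (Finset.univ.filter (fun i => β i = l)).card * N = p * N := by
      rw [← hm]; exact_mod_cast h4
    exact Nat.eq_of_mul_eq_mul_right hN' h5
  · -- backward direction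
    intro h k hk
    have hτk := hτ k hk
    have hfiber : ∑ i, ob N (β i + (k:ℤ))
        = ∑ l ∈ Finset.Icc (0:ℤ) ((N:ℤ) - 1),
            ((Finset.univ.filter (fun i => β i = l)).card : ℤ) * ob N (l + (k:ℤ)) := by
      rw [← Finset.sum_fiberwise_of_maps_to (g := β) (t := Finset.Icc (0:ℤ) ((N:ℤ) - 1))
        (fun i _ => by simp only [Finset.mem_Icc]; exact ⟨(hβ i).1, (hβ i).2⟩)
        (fun i => ob N (β i + (k:ℤ)))]
      refine Finset.sum_congr rfl fun l _ => ?_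
      have hcg : ∀ i ∈ Finset.univ.filter (fun i => β i = l),
          ob N (β i + (k:ℤ)) = ob N (l + (k:ℤ)) := by
        intro i hi
        simp only [Finset.mem_filter] at hi
        rw [hi.2]
      rw [Finset.sum_congr rfl hcg, Finset.sum_const, nsmul_eq_mul]
    have hSk : ∑ i, ob N (β i + (k:ℤ))
        = (p:ℤ) * ∑ l ∈ Finset.Icc (0:ℤ) ((N:ℤ) - 1), l := by
      have hcg : ∀ l ∈ Finset.Icc (0:ℤ) ((N:ℤ) - 1),
          ((Finset.univ.filter (fun i => β i = l)).card : ℤ) * ob N (l + (k:ℤ))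
            = (p:ℤ) * ob N (l + (k:ℤ)) := by
        intro l hl
        simp only [Finset.mem_Icc] at hl
        rw [h l hl.1 hl.2]
      rw [hfiber, Finset.sum_congr rfl hcg, ← Finset.mul_sum, sum_ob_shift hN']
    rw [hSk, hC] at hτk
    have hz : (N:ℤ) * τ k = 0 := by linarith
    have hNne : (N:ℤ) ≠ 0 := by omega
    exact (mul_eq_zero.mp hz).resolve_left hNne
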